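/- Let c_1,…,c_n be reals with c_1 = 0 and c_n = 1, and let d_1,…,d_n be reals with d_1 = d_n = 1 and d_i ≠ 0 for all i. Set A = F·D, Ã = T·(D·A·G)ᵀ·T, C = diag(c_1,…,c_n), and C̃ = I − T·C·T. Then Tr(P·Ã·C̃·Ã·C̃) = Tr(P·A·A·C) − Tr(P·A·A·C·C) + Tr(P·A·A·A·C). -/

import Mathlib

open Finset Matrix
/-- The matrix `D` with entries `d_{ij}`: `0` for `i < j`, `d_i` for `i = j`, and
`-d_j · (∏_{k=j+1}^{i-1} (1 - d_k)) · d_i` for `i > j`. -/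
def Dmat (n : ℕ) (d : Fin n → ℝ) : Matrix (Fin n) (Fin n) ℝ :=
  Matrix.of fun i j =>
    if i < j then 0
    else if i = j then d i
    else -(d j) * (∏ k ∈ Finset.Ioo j i, (1 - d k)) * d i

/-- The lower-triangular matrix `G` with `G_{ii} = 1/d_i`, `G_{ij} = 1` for `i > j`. -/
noncomputable def Gmat (n : ℕ) (d : Fin n → ℝ) : Matrix (Fin n) (Fin n) ℝ :=
  Matrix.of fun i j => if i = j then 1 / d i else if j < i then 1 else 0

/-- The matrix `F` with `F_{ij} = c_i - c_j` for `i > j` and `0` otherwise. -/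
def Fmat (n : ℕ) (c : Fin n → ℝ) : Matrix (Fin n) (Fin n) ℝ :=
  Matrix.of fun i j => if j < i then c i - c j else 0

/-- The antidiagonal permutation matrix `T`, `T_{ij} = 1` iff `i + j = n + 1` (1-based). -/
def Tmat (n : ℕ) : Matrix (Fin n) (Fin n) ℝ :=
  Matrix.of fun i j => if (i : ℕ) + (j : ℕ) + 1 = n then 1 else 0

/-- The matrix `P` whose last column consists of ones and all other entries are `0`. -/
def Pmat (n : ℕ) : Matrix (Fin n) (Fin n) ℝ :=
  Matrix.of fun _ j => if (j : ℕ) + 1 = n then 1 else 0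

noncomputable def tNat (cN dN : ℕ → ℝ) (i : ℕ) : ℝ :=
  ∑ j ∈ Finset.range i, (cN (j+1) - cN j) * ∏ k ∈ Finset.Ico (j+1) i, (1 - dN k)

noncomputable def extN {n : ℕ} (c : Fin n → ℝ) : ℕ → ℝ :=
  fun k => if h : k < n then c ⟨k, h⟩ else 0

theorem extN_coe {n : ℕ} (c : Fin n → ℝ) (i : Fin n) : extN c (i : ℕ) = c i := by
  simp [extN, i.isLt]

theorem tele (dN : ℕ → ℝ) (i : ℕ) :
    ∑ j ∈ range i, dN j * ∏ k ∈ Ico (j+1) i, (1 - dN k)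
      = 1 - ∏ k ∈ range i, (1 - dN k) := by
  calc ∑ j ∈ range i, dN j * ∏ k ∈ Ico (j+1) i, (1 - dN k)
      = ∑ j ∈ range i, ((∏ k ∈ Ico (j+1) i, (1 - dN k)) - ∏ k ∈ Ico j i, (1 - dN k)) := by
        refine Finset.sum_congr rfl fun j hj => ?_
        rw [Finset.prod_eq_prod_Ico_succ_bot (Finset.mem_range.mp hj)]
        ring
    _ = (∏ k ∈ Ico i i, (1 - dN k)) - ∏ k ∈ Ico 0 i, (1 - dN k) :=
        Finset.sum_range_sub (fun j => ∏ k ∈ Ico j i, (1 - dN k)) i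
    _ = 1 - ∏ k ∈ range i, (1 - dN k) := by
        rw [Finset.Ico_self, Finset.prod_empty, Finset.range_eq_Ico]

theorem abel_eq (cN dN : ℕ → ℝ) (hc0 : cN 0 = 0) (i : ℕ) :
    ∑ j ∈ range i, cN j * dN j * ∏ k ∈ Ico (j+1) i, (1 - dN k)
      = cN i - tNat cN dN i := by
  have h : ∑ j ∈ range i, (cN (j+1) * ∏ k ∈ Ico (j+1) i, (1 - dN k)
      - cN j * ∏ k ∈ Ico j i, (1 - dN k))
      = cN i * ∏ k ∈ Ico i i, (1 - dN k) - cN 0 * ∏ k ∈ Ico 0 i, (1 - dN k) :=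
    Finset.sum_range_sub (fun j => cN j * ∏ k ∈ Ico j i, (1 - dN k)) i
  rw [Finset.Ico_self, Finset.prod_empty, hc0] at h
  have h2 : ∑ j ∈ range i, (cN (j+1) * ∏ k ∈ Ico (j+1) i, (1 - dN k)
      - cN j * ∏ k ∈ Ico j i, (1 - dN k))
      = tNat cN dN i + ∑ j ∈ range i, cN j * dN j * ∏ k ∈ Ico (j+1) i, (1 - dN k) := by
    rw [tNat, ← Finset.sum_add_distrib]
    refine Finset.sum_congr rfl fun j hj => ?_
    rw [Finset.prod_eq_prod_Ico_succ_bot (Finset.mem_range.mp hj)]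
    ring
  rw [h2] at h
  linarith

theorem t_succ (cN dN : ℕ → ℝ) (i : ℕ) :
    tNat cN dN (i+1) = (1 - dN i) * tNat cN dN i + (cN (i+1) - cN i) := by
  unfold tNat
  rw [Finset.sum_range_succ, Finset.Ico_self, Finset.prod_empty, mul_one, Finset.mul_sum]
  congr 1
  refine Finset.sum_congr rfl fun j hj => ?_
  rw [Finset.prod_Ico_succ_top (Nat.succ_le_of_lt (Finset.mem_range.mp hj))]
  ring

theorem phi (cN dN : ℕ → ℝ) (hc0 : cN 0 = 0) :
    ∀ i, tNat cN dN i + ∑ k ∈ range i, dN k * tNat cN dN k = cN i := by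
  intro i
  induction i with
  | zero => simp [tNat, hc0]
  | succ i ih =>
    rw [t_succ, Finset.sum_range_succ]
    linarith

theorem prod_Ioo_bridge {n : ℕ} (d : Fin n → ℝ) (j i : Fin n) :
    ∏ k ∈ Finset.Ioo j i, (1 - d k) = ∏ k ∈ Finset.Ico ((j:ℕ)+1) (i:ℕ), (1 - extN d k) := by
  rw [Finset.Ico_add_one_left_eq_Ioo, ← Fin.map_valEmbedding_Ioo, Finset.prod_map]
  exact Finset.prod_congr rfl fun k _ => by rw [Fin.valEmbedding_apply, extN_coe]

theorem sum_Iio_bridge {n : ℕ} (f : Fin n → ℝ) (fN : ℕ → ℝ) (i : Fin n)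
    (h : ∀ k : Fin n, k < i → fN (k : ℕ) = f k) :
    ∑ j ∈ Finset.Iio i, f j = ∑ j ∈ Finset.range (i : ℕ), fN j := by
  rw [← Nat.Iio_eq_range, ← Fin.map_valEmbedding_Iio, Finset.sum_map]
  exact Finset.sum_congr rfl fun k hk => (h k (Finset.mem_Iio.mp hk)).symm

theorem sum_univ_eq_sum_Iic {n : ℕ} (f : Fin n → ℝ) (i : Fin n)
    (h : ∀ j, i < j → f j = 0) :
    ∑ j, f j = ∑ j ∈ Finset.Iic i, f j :=
  (Finset.sum_subset (Finset.subset_univ _) fun j _ hj =>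
    h j (lt_of_not_ge (by simpa [Finset.mem_Iic] using hj))).symm

theorem sum_Iic_split {n : ℕ} (f : Fin n → ℝ) (i : Fin n) :
    ∑ j ∈ Finset.Iic i, f j = f i + ∑ j ∈ Finset.Iio i, f j := by
  rw [← Finset.Iio_insert, Finset.sum_insert (by simp)]

section
variable {n : ℕ} (c d : Fin n → ℝ) (z : Fin n)

theorem rowsumD (hz : (z : ℕ) = 0) (hdz : d z = 1) (q : Fin n) :
    ∑ k, Dmat n d q k = if q = z then 1 else 0 := by
  have h1 : ∑ k, Dmat n d q k = ∑ k ∈ Finset.Iic q, Dmat n d q k :=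
    sum_univ_eq_sum_Iic _ q (fun j hj => by simp [Dmat, hj])
  have hqq : Dmat n d q q = d q := by simp [Dmat]
  have h2 : ∑ k ∈ Finset.Iio q, Dmat n d q k
      = ∑ j ∈ Finset.range (q : ℕ),
          -(extN d j * ((∏ k ∈ Finset.Ico (j+1) (q : ℕ), (1 - extN d k)) * d q)) := by
    refine sum_Iio_bridge _ _ q (fun k hk => ?_)
    rw [extN_coe, ← prod_Ioo_bridge]
    simp only [Dmat, Matrix.of_apply, if_neg (not_lt_of_gt hk), if_neg (ne_of_gt hk)]
    ring
  have h3 : ∑ j ∈ Finset.range (q : ℕ),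
        extN d j * ((∏ k ∈ Finset.Ico (j+1) (q : ℕ), (1 - extN d k)) * d q)
      = (1 - ∏ k ∈ Finset.range (q : ℕ), (1 - extN d k)) * d q := by
    rw [← tele (extN d) (q : ℕ), Finset.sum_mul]
    exact Finset.sum_congr rfl fun j _ => by ring
  rw [h1, sum_Iic_split, hqq, h2, Finset.sum_neg_distrib, h3]
  by_cases hq : q = z
  · subst hq
    rw [if_pos rfl]
    have : (q : ℕ) = 0 := hz
    rw [this]
    simp [hdz]
  · rw [if_neg hq]
    have hq0 : 0 < (q : ℕ) := by
      rcases Nat.eq_zero_or_pos (q : ℕ) with h | h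
      · exact absurd (Fin.ext (h.trans hz.symm)) hq
      · exact h
    have hmem : 0 ∈ Finset.range (q : ℕ) := Finset.mem_range.mpr hq0
    have hzero : (1 : ℝ) - extN d 0 = 0 := by
      have h0n : 0 < n := q.pos
      have : extN d 0 = d z := by
        rw [extN]
        rw [dif_pos h0n]
        congr 1
        exact Fin.ext hz.symm
      rw [this, hdz, sub_self]
    rw [Finset.prod_eq_zero hmem hzero]
    ring

theorem abelD (hz : (z : ℕ) = 0) (hcz : c z = 0) (q : Fin n) :
    ∑ k, Dmat n d q k * c k = d q * tNat (extN c) (extN d) (q : ℕ) := by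
  have h0n : 0 < n := q.pos
  have hc0 : extN c 0 = 0 := by
    rw [extN, dif_pos h0n, show (⟨0, h0n⟩ : Fin n) = z from Fin.ext hz.symm, hcz]
  have h1 : ∑ k, Dmat n d q k * c k = ∑ k ∈ Finset.Iic q, Dmat n d q k * c k :=
    sum_univ_eq_sum_Iic _ q (fun j hj => by simp [Dmat, hj])
  have hqq : Dmat n d q q * c q = d q * c q := by simp [Dmat]
  have h2 : ∑ k ∈ Finset.Iio q, Dmat n d q k * c k
      = ∑ j ∈ Finset.range (q : ℕ),
          -(extN c j * extN d j * ((∏ k ∈ Finset.Ico (j+1) (q : ℕ), (1 - extN d k)) * d q)) := by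
    refine sum_Iio_bridge _ _ q (fun k hk => ?_)
    rw [extN_coe, extN_coe, ← prod_Ioo_bridge]
    simp only [Dmat, Matrix.of_apply, if_neg (not_lt_of_gt hk), if_neg (ne_of_gt hk)]
    ring
  have h3 : ∑ j ∈ Finset.range (q : ℕ),
        extN c j * extN d j * ((∏ k ∈ Finset.Ico (j+1) (q : ℕ), (1 - extN d k)) * d q)
      = (extN c (q : ℕ) - tNat (extN c) (extN d) (q : ℕ)) * d q := by
    rw [← abel_eq (extN c) (extN d) hc0 (q : ℕ), Finset.sum_mul]
    exact Finset.sum_congr rfl fun j _ => by ring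
  rw [h1, sum_Iic_split, hqq, h2, Finset.sum_neg_distrib, h3, extN_coe]
  ring

theorem rowG (k : Fin n) (v : Fin n → ℝ) :
    ∑ j, Gmat n d k j * v j = (1 / d k) * v k + ∑ j ∈ Finset.Iio k, v j := by
  have h1 : ∑ j, Gmat n d k j * v j = ∑ j ∈ Finset.Iic k, Gmat n d k j * v j :=
    sum_univ_eq_sum_Iic _ k (fun j hj => by
      simp only [Gmat, Matrix.of_apply, if_neg (ne_of_lt hj), if_neg (not_lt_of_gt hj),
        zero_mul])
  rw [h1, sum_Iic_split]
  congr 1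
  · simp [Gmat]
  · exact Finset.sum_congr rfl fun j hj => by
      have hj' : j < k := Finset.mem_Iio.mp hj
      simp only [Gmat, Matrix.of_apply, if_neg (ne_of_gt hj'), if_pos hj', one_mul]

theorem rowF (k : Fin n) (v : Fin n → ℝ) :
    ∑ j, Fmat n c k j * v j = ∑ j ∈ Finset.Iio k, (c k - c j) * v j := by
  have h1 : ∑ j, Fmat n c k j * v j = ∑ j ∈ Finset.Iic k, Fmat n c k j * v j :=
    sum_univ_eq_sum_Iic _ k (fun j hj => by
      simp only [Fmat, Matrix.of_apply, if_neg (not_lt_of_gt hj), zero_mul])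
  rw [h1, sum_Iic_split]
  have hkk : Fmat n c k k * v k = 0 := by simp [Fmat]
  rw [hkk, zero_add]
  exact Finset.sum_congr rfl fun j hj => by
    simp only [Fmat, Matrix.of_apply, if_pos (Finset.mem_Iio.mp hj)]

theorem rowsumA (hz : (z : ℕ) = 0) (hcz : c z = 0) (hdz : d z = 1) (p : Fin n) :
    ∑ k, (Fmat n c * Dmat n d) p k = c p := by
  have : ∑ k, (Fmat n c * Dmat n d) p k
      = ∑ q, Fmat n c p q * ∑ k, Dmat n d q k := by
    simp only [Matrix.mul_apply, Finset.mul_sum]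
    rw [Finset.sum_comm]
  rw [this]
  have h2 : ∀ q, Fmat n c p q * ∑ k, Dmat n d q k
      = if q = z then Fmat n c p q else 0 := fun q => by
    rw [rowsumD d z hz hdz q]
    split <;> simp
  simp only [h2, Finset.sum_ite_eq' Finset.univ z, Finset.mem_univ, if_pos]
  by_cases hp : z < p
  · simp [Fmat, hp, hcz]
  · have : p = z := by
      have := p.isLt
      refine Fin.ext ?_
      have h1 : ¬ (z : ℕ) < (p : ℕ) := hp
      omega
    subst this
    simp [Fmat, hcz]

theorem S1row (l : Fin n) (hl : (l : ℕ) = n - 1) (hcl : c l = 1) (k : Fin n) :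
    ∑ i, (1 - c i) * Dmat n d i k = (Fmat n c * Dmat n d) l k := by
  rw [Matrix.mul_apply]
  refine Finset.sum_congr rfl fun i _ => ?_
  by_cases hi : i < l
  · simp only [Fmat, Matrix.of_apply, if_pos hi, hcl]
  · have : i = l := by
      have h1 := i.isLt
      have h2 : ¬ (i : ℕ) < (l : ℕ) := hi
      exact Fin.ext (by omega)
    subst this
    simp [Fmat, hcl]

theorem phiF (hz : (z : ℕ) = 0) (hcz : c z = 0) (k : Fin n) :
    tNat (extN c) (extN d) (k : ℕ)
      + ∑ j ∈ Finset.Iio k, d j * tNat (extN c) (extN d) (j : ℕ) = c k := by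
  have h0n : 0 < n := k.pos
  have hc0 : extN c 0 = 0 := by
    rw [extN, dif_pos h0n, show (⟨0, h0n⟩ : Fin n) = z from Fin.ext hz.symm, hcz]
  have hb : ∑ j ∈ Finset.Iio k, d j * tNat (extN c) (extN d) (j : ℕ)
      = ∑ j ∈ Finset.range (k : ℕ), extN d j * tNat (extN c) (extN d) j :=
    sum_Iio_bridge _ _ k (fun j _ => by rw [extN_coe])
  rw [hb, ← extN_coe c k]
  exact phi (extN c) (extN d) hc0 (k : ℕ)

theorem S1M (l : Fin n) (hl : (l : ℕ) = n - 1) (hcl : c l = 1)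
    (M : Matrix (Fin n) (Fin n) ℝ) (j : Fin n) :
    ∑ i, (1 - c i) * (Dmat n d * M) i j = (Fmat n c * Dmat n d * M) l j := by
  have lhs : ∑ i, (1 - c i) * (Dmat n d * M) i j
      = ∑ k, (∑ i, (1 - c i) * Dmat n d i k) * M k j := by
    simp only [Matrix.mul_apply, Finset.mul_sum, Finset.sum_mul]
    rw [Finset.sum_comm]
    exact Finset.sum_congr rfl fun k _ => Finset.sum_congr rfl fun i _ => by ring
  rw [lhs, Matrix.mul_apply]
  exact Finset.sum_congr rfl fun k _ => by rw [S1row c d l hl hcl k]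

theorem Gz (hz : (z : ℕ) = 0) (hdz : d z = 1) (k : Fin n) : Gmat n d k z = 1 := by
  by_cases hk : k = z
  · subst hk
    simp [Gmat, hdz]
  · have hzk : z < k := by
      have h1 := k.isLt
      have h2 : (k : ℕ) ≠ 0 := fun h => hk (Fin.ext (h.trans hz.symm))
      have : (z : ℕ) < (k : ℕ) := by omega
      exact this
    simp only [Gmat, Matrix.of_apply, if_neg (ne_of_gt hzk), if_pos hzk]

end



section
variable {n : ℕ}

theorem Tapp (i j : Fin n) : Tmat n i j = if j = Fin.rev i then 1 else 0 := by
  have hi := i.isLt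
  simp only [Tmat, Matrix.of_apply]
  congr 1
  simp only [Fin.ext_iff, Fin.val_rev, eq_iff_iff]
  omega

theorem Tapp' (i j : Fin n) : Tmat n i j = if i = Fin.rev j then 1 else 0 := by
  have hi := i.isLt
  have hj := j.isLt
  simp only [Tmat, Matrix.of_apply]
  congr 1
  simp only [Fin.ext_iff, Fin.val_rev, eq_iff_iff]
  omega

theorem Tmul_apply (M : Matrix (Fin n) (Fin n) ℝ) (i j : Fin n) :
    (Tmat n * M) i j = M (Fin.rev i) j := by
  rw [Matrix.mul_apply]
  simp [Tapp, ite_mul, zero_mul, one_mul]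

theorem mulT_apply (M : Matrix (Fin n) (Fin n) ℝ) (i j : Fin n) :
    (M * Tmat n) i j = M i (Fin.rev j) := by
  rw [Matrix.mul_apply]
  simp [Tapp', mul_ite, mul_zero, mul_one]

theorem TmulT : Tmat n * Tmat n = (1 : Matrix (Fin n) (Fin n) ℝ) := by
  ext i j
  rw [Tmul_apply, Tapp, Fin.rev_rev, Matrix.one_apply]
  simp [eq_comm]

theorem TmulP : Tmat n * Pmat n = Pmat n := by
  ext i j
  rw [Tmul_apply]
  rfl

theorem trace_P_mul (hn : 2 ≤ n) (l : Fin n) (hl : (l : ℕ) = n - 1)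
    (M : Matrix (Fin n) (Fin n) ℝ) :
    Matrix.trace (Pmat n * M) = ∑ i, M l i := by
  have hP : ∀ i k : Fin n, Pmat n i k = if k = l then 1 else 0 := by
    intro i k
    have hk := k.isLt
    simp only [Pmat, Matrix.of_apply]
    congr 1
    simp only [Fin.ext_iff, hl, eq_iff_iff]
    omega
  rw [Matrix.trace]
  simp only [Matrix.diag_apply, Matrix.mul_apply, hP, ite_mul, zero_mul, one_mul]
  simp

end


theorem stmt_15 (n : ℕ) (hn : 2 ≤ n) (c d : Fin n → ℝ)
    (hc1 : c ⟨0, by omega⟩ = 0) (hcn : c ⟨n - 1, by omega⟩ = 1)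
    (hd1 : d ⟨0, by omega⟩ = 1) (hdn : d ⟨n - 1, by omega⟩ = 1)
    (hd : ∀ i : Fin n, d i ≠ 0)
    (A Atil C Ctil : Matrix (Fin n) (Fin n) ℝ)
    (hA : A = Fmat n c * Dmat n d)
    (hAtil : Atil = Tmat n * (Dmat n d * A * Gmat n d)ᵀ * Tmat n)
    (hC : C = Matrix.diagonal c)
    (hCtil : Ctil = 1 - Tmat n * C * Tmat n) :
    Matrix.trace (Pmat n * Atil * Ctil * Atil * Ctil) =
      Matrix.trace (Pmat n * A * A * C) - Matrix.trace (Pmat n * A * A * C * C) +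
        Matrix.trace (Pmat n * A * A * A * C) := by
  have hn0 : 0 < n := by omega
  set z : Fin n := ⟨0, hn0⟩ with hzdef
  set l : Fin n := ⟨n - 1, by omega⟩ with hldef
  have hz : (z : ℕ) = 0 := rfl
  have hl : (l : ℕ) = n - 1 := rfl
  have hcz : c z = 0 := hc1
  have hcl : c l = 1 := hcn
  have hdz : d z = 1 := hd1
  have hTT : Tmat n * Tmat n = (1 : Matrix (Fin n) (Fin n) ℝ) := TmulT
  set B : Matrix (Fin n) (Fin n) ℝ := Dmat n d * A * Gmat n d with hB
  set W : Matrix (Fin n) (Fin n) ℝ := Bᵀ * (1 - C) with hWdef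
  -- Step 1: Atil * Ctil = T * W * T
  have e1 : Atil * Ctil = Tmat n * W * Tmat n := by
    rw [hAtil, hCtil]
    calc Tmat n * Bᵀ * Tmat n * (1 - Tmat n * C * Tmat n)
        = Tmat n * Bᵀ * Tmat n - Tmat n * Bᵀ * (Tmat n * Tmat n) * C * Tmat n := by
          noncomm_ring
      _ = Tmat n * Bᵀ * Tmat n - Tmat n * Bᵀ * (1 : Matrix (Fin n) (Fin n) ℝ) * C * Tmat n := by
          rw [hTT]
      _ = Tmat n * (Bᵀ * (1 - C)) * Tmat n := by noncomm_ring
  -- Step 2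
  have e2 : Pmat n * Atil * Ctil * Atil * Ctil
      = Pmat n * (Tmat n * (W * W) * Tmat n) := by
    calc Pmat n * Atil * Ctil * Atil * Ctil
        = Pmat n * (Atil * Ctil) * (Atil * Ctil) := by noncomm_ring
      _ = Pmat n * (Tmat n * W * Tmat n) * (Tmat n * W * Tmat n) := by rw [e1]
      _ = Pmat n * (Tmat n * (W * ((Tmat n * Tmat n) * W)) * Tmat n) := by noncomm_ring
      _ = Pmat n * (Tmat n * (W * ((1 : Matrix (Fin n) (Fin n) ℝ) * W)) * Tmat n) := by
          rw [hTT]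
      _ = Pmat n * (Tmat n * (W * W) * Tmat n) := by noncomm_ring
  -- Step 3: the trace of the LHS
  have hrl : Fin.rev l = z := by
    refine Fin.ext ?_
    rw [Fin.val_rev, hl, hz]
    omega
  have e3 : Matrix.trace (Pmat n * (Tmat n * (W * W) * Tmat n)) = ∑ i, (W * W) z i := by
    have s1 : Pmat n * (Tmat n * (W * W) * Tmat n)
        = (Pmat n * (Tmat n * (W * W))) * Tmat n := by noncomm_ring
    rw [s1, Matrix.trace_mul_comm]
    have s2 : Tmat n * (Pmat n * (Tmat n * (W * W)))
        = (Tmat n * Pmat n) * (Tmat n * (W * W)) := by noncomm_ring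
    rw [s2, TmulP, trace_P_mul hn l hl]
    refine Finset.sum_congr rfl fun i _ => ?_
    rw [Tmul_apply, hrl]
  -- W entries
  have hW : ∀ a b, W a b = B b a * (1 - c b) := by
    intro a b
    rw [hWdef, hC]
    have hd1m : (1 : Matrix (Fin n) (Fin n) ℝ) - Matrix.diagonal c
        = Matrix.diagonal (fun x => 1 - c x) := by
      rw [← Matrix.diagonal_one, Matrix.diagonal_sub]
    rw [hd1m, Matrix.mul_diagonal, Matrix.transpose_apply]
  -- column z of B
  have hGz : ∀ k, Gmat n d k z = 1 := Gz d z hz hdz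
  have hArow : ∀ p, ∑ k, A p k = c p := by
    intro p
    rw [hA]
    exact rowsumA c d z hz hcz hdz p
  set Dc : Fin n → ℝ := fun q => ∑ p, Dmat n d q p * c p with hDcdef
  have colz : ∀ j, B j z = Dc j := by
    intro j
    rw [hB, Matrix.mul_apply]
    simp only [hGz, mul_one]
    calc ∑ k, (Dmat n d * A) j k
        = ∑ k, ∑ p, Dmat n d j p * A p k := by
          exact Finset.sum_congr rfl fun k _ => Matrix.mul_apply
      _ = ∑ p, Dmat n d j p * ∑ k, A p k := by
          rw [Finset.sum_comm]
          exact Finset.sum_congr rfl fun p _ => by rw [Finset.mul_sum]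
      _ = Dc j := by
          simp only [hArow, hDcdef]
  -- weighted column sums of B
  have colB : ∀ j, ∑ i, (1 - c i) * B i j = (A * A * Gmat n d) l j := by
    intro j
    have h1 : B = Dmat n d * (A * Gmat n d) := by rw [hB, Matrix.mul_assoc]
    rw [h1]
    have h2 := S1M c d l hl hcl (A * Gmat n d) j
    rw [h2, ← hA, ← Matrix.mul_assoc]
  -- the LHS as a single sum
  set tF : Fin n → ℝ := fun q => tNat (extN c) (extN d) (q : ℕ) with htF
  have hDc : ∀ q, Dc q = d q * tF q := fun q => abelD c d z hz hcz q
  have lhs_sum : ∑ i, (W * W) z i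
      = ∑ k, (A * A) l k * ((1 / d k) * ((1 - c k) * Dc k)
          + ∑ j ∈ Finset.Iio k, (1 - c j) * Dc j) := by
    calc ∑ i, (W * W) z i
        = ∑ i, ∑ j, W z j * W j i := by
          exact Finset.sum_congr rfl fun i _ => Matrix.mul_apply
      _ = ∑ j, W z j * ∑ i, W j i := by
          rw [Finset.sum_comm]
          exact Finset.sum_congr rfl fun j _ => by rw [Finset.mul_sum]
      _ = ∑ j, (Dc j * (1 - c j)) * ((A * A * Gmat n d) l j) := by
          refine Finset.sum_congr rfl fun j _ => ?_
          rw [hW, colz, ← colB]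
          congr 1
          refine Finset.sum_congr rfl fun i _ => ?_
          rw [hW]
          ring
      _ = ∑ j, ∑ k, ((A * A) l k * Gmat n d k j) * ((1 - c j) * Dc j) := by
          refine Finset.sum_congr rfl fun j _ => ?_
          have h3 : (A * A * Gmat n d) l j = ∑ k, (A * A) l k * Gmat n d k j :=
            Matrix.mul_apply
          rw [h3, Finset.mul_sum]
          exact Finset.sum_congr rfl fun k _ => by ring
      _ = ∑ k, (A * A) l k * ∑ j, Gmat n d k j * ((1 - c j) * Dc j) := by
          rw [Finset.sum_comm]
          refine Finset.sum_congr rfl fun k _ => ?_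
          rw [Finset.mul_sum]
          exact Finset.sum_congr rfl fun j _ => by ring
      _ = ∑ k, (A * A) l k * ((1 / d k) * ((1 - c k) * Dc k)
            + ∑ j ∈ Finset.Iio k, (1 - c j) * Dc j) := by
          refine Finset.sum_congr rfl fun k _ => ?_
          rw [rowG d k (fun j => (1 - c j) * Dc j)]
  -- per-k identity
  have perk : ∀ k : Fin n,
      (1 / d k) * ((1 - c k) * Dc k) + ∑ j ∈ Finset.Iio k, (1 - c j) * Dc j
      = c k - c k * c k + ∑ q ∈ Finset.Iio k, (c k - c q) * Dc q := by
    intro k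
    have hphi : tF k + ∑ j ∈ Finset.Iio k, d j * tF j = c k := phiF c d z hz hcz k
    simp only [hDc]
    have hk1 : (1 / d k) * ((1 - c k) * (d k * tF k)) = (1 - c k) * tF k := by
      field_simp [hd k]
    rw [hk1]
    have hs1 : ∑ j ∈ Finset.Iio k, (1 - c j) * (d j * tF j)
        = (∑ j ∈ Finset.Iio k, d j * tF j) - ∑ j ∈ Finset.Iio k, c j * (d j * tF j) := by
      rw [← Finset.sum_sub_distrib]
      exact Finset.sum_congr rfl fun j _ => by ring
    have hs2 : ∑ q ∈ Finset.Iio k, (c k - c q) * (d q * tF q)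
        = c k * (∑ j ∈ Finset.Iio k, d j * tF j)
          - ∑ j ∈ Finset.Iio k, c j * (d j * tF j) := by
      rw [Finset.mul_sum, ← Finset.sum_sub_distrib]
      exact Finset.sum_congr rfl fun j _ => by ring
    rw [hs1, hs2]
    linear_combination (1 - c k) * hphi
  -- RHS traces
  have rhs1 : Matrix.trace (Pmat n * A * A * C) = ∑ i, (A * A) l i * c i := by
    have h1 : Pmat n * A * A * C = Pmat n * (A * A * C) := by noncomm_ring
    rw [h1, trace_P_mul hn l hl]
    refine Finset.sum_congr rfl fun i _ => ?_
    rw [hC, Matrix.mul_diagonal]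
  have rhs2 : Matrix.trace (Pmat n * A * A * C * C) = ∑ i, (A * A) l i * c i * c i := by
    have h1 : Pmat n * A * A * C * C = Pmat n * (A * A * C * C) := by noncomm_ring
    rw [h1, trace_P_mul hn l hl]
    refine Finset.sum_congr rfl fun i _ => ?_
    rw [hC, Matrix.mul_diagonal, Matrix.mul_diagonal]
  have rhs3 : Matrix.trace (Pmat n * A * A * A * C)
      = ∑ k, (A * A) l k * ∑ q ∈ Finset.Iio k, (c k - c q) * Dc q := by
    have h1 : Pmat n * A * A * A * C = Pmat n * (A * A * A * C) := by noncomm_ring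
    rw [h1, trace_P_mul hn l hl]
    have h2 : ∀ i, (A * A * A * C) l i = (∑ k, (A * A) l k * A k i) * c i := by
      intro i
      rw [hC, Matrix.mul_diagonal, Matrix.mul_apply]
    simp only [h2]
    calc ∑ i, (∑ k, (A * A) l k * A k i) * c i
        = ∑ i, ∑ k, (A * A) l k * (A k i * c i) := by
          refine Finset.sum_congr rfl fun i _ => ?_
          rw [Finset.sum_mul]
          exact Finset.sum_congr rfl fun k _ => by ring
      _ = ∑ k, (A * A) l k * ∑ i, A k i * c i := by
          rw [Finset.sum_comm]
          exact Finset.sum_congr rfl fun k _ => by rw [Finset.mul_sum]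
      _ = ∑ k, (A * A) l k * ∑ q ∈ Finset.Iio k, (c k - c q) * Dc q := by
          refine Finset.sum_congr rfl fun k _ => ?_
          congr 1
          calc ∑ i, A k i * c i
              = ∑ i, (∑ q, Fmat n c k q * Dmat n d q i) * c i := by
                refine Finset.sum_congr rfl fun i _ => ?_
                rw [hA, Matrix.mul_apply]
            _ = ∑ q, Fmat n c k q * Dc q := by
                calc ∑ i, (∑ q, Fmat n c k q * Dmat n d q i) * c i
                    = ∑ i, ∑ q, Fmat n c k q * (Dmat n d q i * c i) := by
                      refine Finset.sum_congr rfl fun i _ => ?_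
                      rw [Finset.sum_mul]
                      exact Finset.sum_congr rfl fun q _ => by ring
                  _ = ∑ q, Fmat n c k q * Dc q := by
                      rw [Finset.sum_comm]
                      exact Finset.sum_congr rfl fun q _ => by rw [Finset.mul_sum]
            _ = ∑ q ∈ Finset.Iio k, (c k - c q) * Dc q := rowF c k Dc
  rw [e2, e3, lhs_sum, rhs1, rhs2, rhs3]
  have final : ∑ k, (A * A) l k * ((1 / d k) * ((1 - c k) * Dc k)
      + ∑ j ∈ Finset.Iio k, (1 - c j) * Dc j)
      = ∑ k, (A * A) l k * (c k - c k * c k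
          + ∑ q ∈ Finset.Iio k, (c k - c q) * Dc q) :=
    Finset.sum_congr rfl fun k _ => by rw [perk k]
  rw [final, ← Finset.sum_sub_distrib, ← Finset.sum_add_distrib]
  exact Finset.sum_congr rfl fun k _ => by ring
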